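/- Assume E_c is a critical energy of the random polymer model. Fix c₊, c₋ ∈ ℂ and j ∈ {1,2}, and set I^j_N(θ,ε) = E₀( Σ_{l=0}^{N−1} c_{ω_l} e^{2ij·S_{ε,ω}^l(θ)} ). If ⟨e^{2ij·η_±}⟩ ≠ 1, then there exist C < ∞ and ε₀ > 0 such that for all |ε| ≤ ε₀, all N ≥ 1 and all θ ∈ ℝ: |I^j_N(θ,ε)| ≤ C·( N·(|b₊^ε| + |b₋^ε|) + 1 ). -/

import Mathlib

open MeasureTheory Filter
open scoped BigOperators ENNReal

noncomputable section

/-- Single-site transfer matrix `T_{v,t}`. -/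
def Tst (v t : ℝ) : Matrix (Fin 2) (Fin 2) ℝ := (1 / t) • !![v, -t ^ 2; 1, 0]

/-- Transfer matrix over one polymer block of length `L`. -/
def Tblock (L : ℕ) (vh th : ℕ → ℝ) (E : ℝ) : Matrix (Fin 2) (Fin 2) ℝ :=
  ((List.range L).reverse.map fun j => Tst (vh j - E) (th j)).prod

/-- The transfer matrix of the polymer of sign `s` at energy `E`. -/
def Tpoly (L : Bool → ℕ) (vh th : Bool → ℕ → ℝ) (E : ℝ) (s : Bool) :
    Matrix (Fin 2) (Fin 2) ℝ :=
  Tblock (L s) (vh s) (th s) E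

/-- Transfer matrix over the polymers `m, m+1, …, k-1`. -/
def TW (L : Bool → ℕ) (vh th : Bool → ℕ → ℝ) (ω : ℤ → Bool) (E : ℝ) (k m : ℤ) :
    Matrix (Fin 2) (Fin 2) ℝ :=
  ((List.range (k - m).toNat).map fun i => Tpoly L vh th E (ω (k - 1 - i))).prod

/-- Rotation matrix by angle `η`. -/
def rotMat (η : ℝ) : Matrix (Fin 2) (Fin 2) ℝ :=
  !![Real.cos η, -Real.sin η; Real.sin η, Real.cos η]

/-- Euclidean operator norm of a real 2×2 matrix. -/
def opNormR (A : Matrix (Fin 2) (Fin 2) ℝ) : ℝ := ‖Matrix.toEuclideanCLM (𝕜 := ℝ) A‖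

/-- Average `⟨c±⟩ = p₊ c₊ + p₋ c₋` (real version). -/
def avgR (p : ℝ) (c : Bool → ℝ) : ℝ := p * c true + (1 - p) * c false

/-- Average `⟨c±⟩ = p₊ c₊ + p₋ c₋` (complex version). -/
def avgC (p : ℝ) (c : Bool → ℂ) : ℂ := p * c true + (1 - p) * c false

/-- The vector `v = (1, -i)ᵀ/√2`. -/
def vv : Fin 2 → ℂ := ![1 / (Real.sqrt 2 : ℂ), -Complex.I / (Real.sqrt 2 : ℂ)]

/-- Its entrywise conjugate `v̄ = (1, i)ᵀ/√2`. -/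
def vvbar : Fin 2 → ℂ := ![1 / (Real.sqrt 2 : ℂ), Complex.I / (Real.sqrt 2 : ℂ)]

/-- Iterated polymer phase shifts. -/
def Sit (S : Bool → ℝ → ℝ → ℝ) (ω : ℤ → Bool) (ε : ℝ) : ℕ → ℝ → ℝ
  | 0, θ => θ
  | l + 1, θ => S (ω l) ε (Sit S ω ε l θ)

def Complex.abs : AbsoluteValue ℂ ℝ := IsAbsoluteValue.toAbsoluteValue (norm : ℂ → ℝ)

theorem Complex.norm_eq_abs (z : ℂ) : ‖z‖ = Complex.abs z := rfl

theorem Complex.abs_ofReal (x : ℝ) : Complex.abs (x : ℂ) = |x| := by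
  show ‖(x : ℂ)‖ = |x|; simp

theorem Complex.abs_abs (z : ℂ) : |Complex.abs z| = Complex.abs z := by
  show |‖z‖| = ‖z‖; simp

theorem Complex.abs_conj (z : ℂ) : Complex.abs ((starRingEnd ℂ) z) = Complex.abs z := by
  show ‖(starRingEnd ℂ) z‖ = ‖z‖; simp

theorem Complex.abs_exp_ofReal_mul_I (x : ℝ) : Complex.abs (Complex.exp (x * Complex.I)) = 1 :=
  Complex.norm_exp_ofReal_mul_I x

theorem Complex.continuous_abs : Continuous Complex.abs := continuous_norm

section Aux
open ProbabilityTheory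

lemma unitDir_lip (z w : ℂ) (hz : z ≠ 0) (hw : w ≠ 0) :
    Complex.abs (z / Complex.abs z - w / Complex.abs w) ≤ 2 * Complex.abs (z - w) / Complex.abs w := by
  have hz' : (Complex.abs z : ℝ) ≠ 0 := Complex.abs.ne_zero hz
  have hw' : (Complex.abs w : ℝ) ≠ 0 := Complex.abs.ne_zero hw
  have hzc : ((Complex.abs z : ℝ) : ℂ) ≠ 0 := by exact_mod_cast hz'
  have hwc : ((Complex.abs w : ℝ) : ℂ) ≠ 0 := by exact_mod_cast hw'
  have hzpos : (0:ℝ) < Complex.abs z := Complex.abs.pos hz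
  have hwpos : (0:ℝ) < Complex.abs w := Complex.abs.pos hw
  have key : z / (Complex.abs z : ℂ) - w / (Complex.abs w : ℂ)
      = (z - w) / (Complex.abs w : ℂ) + z * ((1:ℂ)/(Complex.abs z : ℂ) - 1/(Complex.abs w : ℂ)) := by
    field_simp
    ring
  rw [key]
  have h1 : Complex.abs ((z - w) / (Complex.abs w : ℂ)) = Complex.abs (z - w) / Complex.abs w := by
    rw [map_div₀, Complex.abs_ofReal, abs_of_pos hwpos]
  have h2 : Complex.abs (z * ((1:ℂ)/(Complex.abs z : ℂ) - 1/(Complex.abs w : ℂ)))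
      ≤ Complex.abs (z - w) / Complex.abs w := by
    have e1 : (1:ℂ)/(Complex.abs z : ℂ) - 1/(Complex.abs w : ℂ)
        = (((Complex.abs w - Complex.abs z : ℝ)) : ℂ) / ((Complex.abs z : ℂ) * (Complex.abs w : ℂ)) := by
      push_cast
      field_simp
    rw [e1, map_mul, map_div₀, map_mul]
    rw [Complex.abs_ofReal, Complex.abs_ofReal, Complex.abs_ofReal]
    rw [abs_of_pos hzpos, abs_of_pos hwpos]
    have habs : |Complex.abs w - Complex.abs z| ≤ Complex.abs (z - w) := by
      calc |Complex.abs w - Complex.abs z| ≤ Complex.abs (w - z) :=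
            Complex.abs.abs_abv_sub_le_abv_sub w z
        _ = Complex.abs (z - w) := by rw [← neg_sub, Complex.abs.map_neg]
    calc Complex.abs z * (|Complex.abs w - Complex.abs z| / (Complex.abs z * Complex.abs w))
        = |Complex.abs w - Complex.abs z| / Complex.abs w := by field_simp
      _ ≤ Complex.abs (z - w) / Complex.abs w := by
          gcongr
  calc Complex.abs ((z - w) / (Complex.abs w : ℂ) + z * ((1:ℂ)/(Complex.abs z : ℂ) - 1/(Complex.abs w : ℂ)))
      ≤ Complex.abs ((z - w) / (Complex.abs w : ℂ))
        + Complex.abs (z * ((1:ℂ)/(Complex.abs z : ℂ) - 1/(Complex.abs w : ℂ))) :=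
        Complex.abs.add_le _ _
    _ ≤ Complex.abs (z - w) / Complex.abs w + Complex.abs (z - w) / Complex.abs w := by
        rw [h1]; exact add_le_add (le_refl _) h2
    _ = 2 * Complex.abs (z - w) / Complex.abs w := by ring

lemma unit_pow_lip (u v : ℂ) (hu : Complex.abs u = 1) (hv : Complex.abs v = 1) (n : ℕ) :
    Complex.abs (u ^ n - v ^ n) ≤ n * Complex.abs (u - v) := by
  induction n with
  | zero => simp
  | succ n ih =>
    have : u ^ (n+1) - v ^ (n+1) = u ^ n * (u - v) + (u ^ n - v ^ n) * v := by ring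
    rw [this]
    calc Complex.abs (u ^ n * (u - v) + (u ^ n - v ^ n) * v)
        ≤ Complex.abs (u ^ n * (u - v)) + Complex.abs ((u ^ n - v ^ n) * v) := Complex.abs.add_le _ _
      _ = Complex.abs (u - v) + Complex.abs (u ^ n - v ^ n) := by
          rw [map_mul, map_mul, map_pow, hu, hv, one_pow, one_mul, mul_one]
      _ ≤ Complex.abs (u - v) + n * Complex.abs (u - v) := by linarith
      _ = (n + 1 : ℕ) * Complex.abs (u - v) := by push_cast; ring

lemma indep_integral_mul_complex {Ω : Type*} [MeasurableSpace Ω] {μ : Measure Ω}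
    {X Y : Ω → ℂ} (h : IndepFun X Y μ) (hX : Integrable X μ) (hY : Integrable Y μ) :
    ∫ ω, X ω * Y ω ∂μ = (∫ ω, X ω ∂μ) * ∫ ω, Y ω ∂μ := by
  have mre : Measurable fun z : ℂ => z.re := Complex.measurable_re
  have mim : Measurable fun z : ℂ => z.im := Complex.measurable_im
  have hXr : Integrable (fun ω => (X ω).re) μ := hX.re
  have hXi : Integrable (fun ω => (X ω).im) μ := hX.im
  have hYr : Integrable (fun ω => (Y ω).re) μ := hY.re
  have hYi : Integrable (fun ω => (Y ω).im) μ := hY.im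
  have hrr := (h.comp mre mre).integral_fun_mul_eq_mul_integral hXr.aestronglyMeasurable hYr.aestronglyMeasurable
  have hri := (h.comp mre mim).integral_fun_mul_eq_mul_integral hXr.aestronglyMeasurable hYi.aestronglyMeasurable
  have hir := (h.comp mim mre).integral_fun_mul_eq_mul_integral hXi.aestronglyMeasurable hYr.aestronglyMeasurable
  have hii := (h.comp mim mim).integral_fun_mul_eq_mul_integral hXi.aestronglyMeasurable hYi.aestronglyMeasurable
  simp only [Function.comp_def, Pi.mul_apply] at hrr hri hir hii
  have irr : Integrable (fun ω => (X ω).re * (Y ω).re) μ := by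
    have := (h.comp mre mre).integrable_mul hXr hYr
    exact this
  have iri : Integrable (fun ω => (X ω).re * (Y ω).im) μ := by
    have := (h.comp mre mim).integrable_mul hXr hYi
    exact this
  have iir : Integrable (fun ω => (X ω).im * (Y ω).re) μ := by
    have := (h.comp mim mre).integrable_mul hXi hYr
    exact this
  have iii : Integrable (fun ω => (X ω).im * (Y ω).im) μ := by
    have := (h.comp mim mim).integrable_mul hXi hYi
    exact this
  have hXY : Integrable (fun ω => X ω * Y ω) μ := by
    have e : (fun ω => X ω * Y ω) = fun ω =>
        (((X ω).re * (Y ω).re - (X ω).im * (Y ω).im : ℝ) : ℂ)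
        + (((X ω).re * (Y ω).im + (X ω).im * (Y ω).re : ℝ) : ℂ) * Complex.I := by
      funext ω
      apply Complex.ext <;> simp
    rw [e]
    exact ((irr.sub iii).ofReal.add (((iri.add iir)).ofReal.mul_const Complex.I))
  have e1 := integral_re_add_im (𝕜 := ℂ) hXY
  have e2 := integral_re_add_im (𝕜 := ℂ) hX
  have e3 := integral_re_add_im (𝕜 := ℂ) hY
  simp only [RCLike.re_to_complex, RCLike.im_to_complex, RCLike.I_to_complex] at e1 e2 e3
  have hre : ∫ ω, (X ω * Y ω).re ∂μ
      = (∫ ω, (X ω).re ∂μ) * (∫ ω, (Y ω).re ∂μ) - (∫ ω, (X ω).im ∂μ) * (∫ ω, (Y ω).im ∂μ) := by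
    have e : (fun ω => (X ω * Y ω).re)
        = fun ω => (X ω).re * (Y ω).re - (X ω).im * (Y ω).im := by
      funext ω; simp [Complex.mul_re]
    rw [e, integral_sub irr iii, hrr, hii]
  have him : ∫ ω, (X ω * Y ω).im ∂μ
      = (∫ ω, (X ω).re ∂μ) * (∫ ω, (Y ω).im ∂μ) + (∫ ω, (X ω).im ∂μ) * (∫ ω, (Y ω).re ∂μ) := by
    have e : (fun ω => (X ω * Y ω).im)
        = fun ω => (X ω).re * (Y ω).im + (X ω).im * (Y ω).re := by
      funext ω; simp [Complex.mul_im]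
    rw [e, integral_add iri iir, hri, hir]
  rw [← e1, ← e2, ← e3, hre, him]
  push_cast
  ring_nf
  rw [Complex.I_sq]
  ring

lemma continuous_Tst (vj t : ℝ) : Continuous fun E : ℝ => Tst (vj - E) t := by
  apply continuous_matrix
  intro i j
  fin_cases i <;> fin_cases j <;>
    · simp [Tst]
      fun_prop

lemma continuous_listprod (vh th : ℕ → ℝ) (l : List ℕ) :
    Continuous fun E : ℝ => (l.map fun j => Tst (vh j - E) (th j)).prod := by
  induction l with
  | nil => simpa using continuous_const
  | cons hd tl ih =>
    simp only [List.map_cons, List.prod_cons]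
    exact (continuous_Tst (vh hd) (th hd)).matrix_mul ih

lemma continuous_Tblock (L : ℕ) (vh th : ℕ → ℝ) :
    Continuous fun E : ℝ => Tblock L vh th E :=
  continuous_listprod vh th _

lemma continuous_conj_entry (M N : Matrix (Fin 2) (Fin 2) ℝ) (L : ℕ) (vh th : ℕ → ℝ) (Ec : ℝ)
    (i j : Fin 2) :
    Continuous fun ε : ℝ => (M * Tblock L vh th (Ec + ε) * N) i j := by
  have h : Continuous fun ε : ℝ => M * Tblock L vh th (Ec + ε) * N :=
    ((continuous_const.matrix_mul
      ((continuous_Tblock L vh th).comp (continuous_const.add continuous_id))).matrix_mul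
      continuous_const)
  exact h.matrix_elem i j

lemma ab_formulas (A : Matrix (Fin 2) (Fin 2) ℝ) (a b : ℂ)
    (hab : (A.map Complex.ofReal).mulVec vv = a • vv + b • vvbar) :
    a = (((A 0 0 + A 1 1 : ℝ) : ℂ) + ((A 1 0 - A 0 1 : ℝ) : ℂ) * Complex.I) / 2 ∧
    b = (((A 0 0 - A 1 1 : ℝ) : ℂ) - ((A 0 1 + A 1 0 : ℝ) : ℂ) * Complex.I) / 2 := by
  have h2r : (0:ℝ) < Real.sqrt 2 := Real.sqrt_pos.mpr (by norm_num)
  have h2 : ((Real.sqrt 2 : ℝ) : ℂ) ≠ 0 := by exact_mod_cast h2r.ne'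
  have e0 := congrFun hab 0
  have e1 := congrFun hab 1
  simp only [Matrix.mulVec, dotProduct, Fin.sum_univ_two, Matrix.map_apply, vv, vvbar,
    Pi.add_apply, Pi.smul_apply, smul_eq_mul, Matrix.cons_val_zero, Matrix.cons_val_one,
    Matrix.head_cons] at e0 e1
  field_simp at e0 e1
  have hsq : ((Real.sqrt 2 : ℝ) : ℂ) ^ 2 = 2 := by
    rw [← Complex.ofReal_pow, Real.sq_sqrt] <;> norm_num
  ring_nf at e1
  have e1' : a - b = ((A 1 1 : ℝ) : ℂ) + ((A 1 0 : ℝ) : ℂ) * Complex.I := by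
    linear_combination (-Complex.I) * e1 + (a - b - ((A 1 1 : ℝ) : ℂ)) * Complex.I_sq
  constructor
  · push_cast
    linear_combination (-1/2 : ℂ) * e0 + (1/2 : ℂ) * e1'
  · push_cast
    linear_combination (-1/2 : ℂ) * e0 + (-1/2 : ℂ) * e1'

lemma key_w (A : Matrix (Fin 2) (Fin 2) ℝ) (a b : ℂ)
    (hab : (A.map Complex.ofReal).mulVec vv = a • vv + b • vvbar)
    (θ Sθ ρ : ℝ)
    (hS : A.mulVec ![Real.cos θ, Real.sin θ] = ρ • ![Real.cos Sθ, Real.sin Sθ]) :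
    (ρ : ℂ) * Complex.exp ((Sθ : ℂ) * Complex.I)
      = a * Complex.exp ((θ : ℂ) * Complex.I)
        + (starRingEnd ℂ) b * Complex.exp (-(θ : ℂ) * Complex.I) := by
  obtain ⟨ha, hb⟩ := ab_formulas A a b hab
  have r0 := congrFun hS 0
  have r1 := congrFun hS 1
  simp only [Matrix.mulVec, dotProduct, Fin.sum_univ_two, Pi.smul_apply, smul_eq_mul,
    Matrix.cons_val_zero, Matrix.cons_val_one, Matrix.head_cons] at r0 r1
  have C0 : ((A 0 0 : ℝ) : ℂ) * (Real.cos θ : ℂ) + ((A 0 1 : ℝ) : ℂ) * (Real.sin θ : ℂ)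
      = (ρ : ℂ) * (Real.cos Sθ : ℂ) := by exact_mod_cast congrArg Complex.ofReal r0
  have C1 : ((A 1 0 : ℝ) : ℂ) * (Real.cos θ : ℂ) + ((A 1 1 : ℝ) : ℂ) * (Real.sin θ : ℂ)
      = (ρ : ℂ) * (Real.sin Sθ : ℂ) := by exact_mod_cast congrArg Complex.ofReal r1
  have hcb : (starRingEnd ℂ) b
      = (((A 0 0 - A 1 1 : ℝ) : ℂ) + ((A 0 1 + A 1 0 : ℝ) : ℂ) * Complex.I) / 2 := by
    rw [hb]
    simp only [map_div₀, map_sub, map_add, map_mul, Complex.conj_ofReal, Complex.conj_I,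
      map_ofNat]
    ring
  rw [ha, hcb, Complex.exp_mul_I, Complex.exp_mul_I, Complex.exp_mul_I, Complex.cos_neg,
    Complex.sin_neg]
  push_cast at C0 C1 ⊢
  linear_combination (-1 : ℂ) * C0 + (-Complex.I) * C1
    + (((A 0 1 : ℝ) : ℂ) * Complex.sin ((θ : ℝ) : ℂ)) * Complex.I_sq

lemma Sit_congr (S : Bool → ℝ → ℝ → ℝ) (ε θ : ℝ) (l : ℕ) (ω ω' : ℤ → Bool)
    (h : ∀ i : ℕ, i < l → ω i = ω' i) : Sit S ω ε l θ = Sit S ω' ε l θ := by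
  induction l with
  | zero => rfl
  | succ n ih =>
    show S (ω n) ε (Sit S ω ε n θ) = S (ω' n) ε (Sit S ω' ε n θ)
    rw [h n (Nat.lt_succ_self n), ih (fun i hi => h i (hi.trans (Nat.lt_succ_self n)))]

lemma measurable_Sit (S : Bool → ℝ → ℝ → ℝ) (hScont : ∀ s, Continuous fun q : ℝ × ℝ => S s q.1 q.2)
    (ε θ : ℝ) (l : ℕ) : Measurable fun ω : ℤ → Bool => Sit S ω ε l θ := by
  induction l with
  | zero => exact measurable_const
  | succ n ih =>
    have hc : ∀ s : Bool, Continuous fun x : ℝ => S s ε x := fun s =>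
      (hScont s).comp (Continuous.prodMk_right ε)
    have : (fun ω : ℤ → Bool => Sit S ω ε (n+1) θ)
        = fun ω => if ω (n : ℤ) = true then S true ε (Sit S ω ε n θ)
            else S false ε (Sit S ω ε n θ) := by
      funext ω
      show S (ω n) ε _ = _
      by_cases h : ω (n : ℤ) = true
      · rw [if_pos h, h]
      · rw [if_neg h, Bool.not_eq_true] at *
        rw [h]
    rw [this]
    have hA : MeasurableSet {ω : ℤ → Bool | ω (n : ℤ) = true} := by
      have e : {ω : ℤ → Bool | ω (n : ℤ) = true} = (fun ω : ℤ → Bool => ω (n : ℤ)) ⁻¹' {true} := by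
        ext; simp
      rw [e]; exact measurable_pi_apply (n : ℤ) (measurableSet_singleton true)
    exact Measurable.ite hA ((hc true).measurable.comp ih) ((hc false).measurable.comp ih)

lemma indepFun_sit {P₀ : Measure (ℤ → Bool)}
    (hiid : iIndepFun (fun l ω => ω l) P₀)
    (S : Bool → ℝ → ℝ → ℝ) (hScont : ∀ s, Continuous fun q : ℝ × ℝ => S s q.1 q.2)
    (ε θ : ℝ) (l : ℕ) :
    IndepFun (fun ω : ℤ → Bool => Sit S ω ε l θ) (fun ω : ℤ → Bool => ω (l : ℤ)) P₀ := by
  classical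
  set T1 : Finset ℤ := (Finset.range l).image (fun i : ℕ => (i : ℤ)) with hT1
  set T2 : Finset ℤ := {(l : ℤ)} with hT2
  have hdisj : Disjoint T1 T2 := by
    rw [Finset.disjoint_left]
    intro x hx hx2
    simp only [hT1, Finset.mem_image, Finset.mem_range] at hx
    simp only [hT2, Finset.mem_singleton] at hx2
    obtain ⟨k, hk, rfl⟩ := hx
    exact absurd (by exact_mod_cast hx2 : k = l) hk.ne
  have base := hiid.indepFun_finset T1 T2 hdisj (fun i => measurable_pi_apply i)
  set φ : ((i : T1) → Bool) → ℝ := fun x =>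
    Sit S (fun i : ℤ => if h : i ∈ T1 then x ⟨i, h⟩ else false) ε l θ with hφ
  have hmem : (l : ℤ) ∈ T2 := by simp [hT2]
  set ψ : ((i : T2) → Bool) → Bool := fun x => x ⟨(l : ℤ), hmem⟩ with hψ
  have measφ : Measurable φ := measurable_of_countable _
  have measψ : Measurable ψ := measurable_of_countable _
  have res := base.comp measφ measψ
  have e1 : (φ ∘ fun ω (i : T1) => ω i) = fun ω : ℤ → Bool => Sit S ω ε l θ := by
    funext ω
    show Sit S _ ε l θ = Sit S ω ε l θ
    apply Sit_congr
    intro i hi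
    have hmem' : (i : ℤ) ∈ T1 := by
      simp only [hT1, Finset.mem_image, Finset.mem_range]
      exact ⟨i, hi, rfl⟩
    simp [hmem']
  have e2 : (ψ ∘ fun ω (i : T2) => ω i) = fun ω : ℤ → Bool => ω (l : ℤ) := rfl
  rw [e1, e2] at res
  exact res

lemma integral_coord {P₀ : Measure (ℤ → Bool)} [IsProbabilityMeasure P₀]
    (p : ℝ) (hp : 0 < p ∧ p < 1)
    (hber : ∀ l : ℤ, P₀ {ω | ω l = true} = ENNReal.ofReal p)
    (k : ℤ) (g : Bool → ℂ) :
    ∫ ω, g (ω k) ∂P₀ = avgC p g := by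
  classical
  have hA : MeasurableSet {ω : ℤ → Bool | ω k = true} := by
    have e : {ω : ℤ → Bool | ω k = true} = (fun ω : ℤ → Bool => ω k) ⁻¹' {true} := by ext; simp
    rw [e]; exact measurable_pi_apply k (measurableSet_singleton true)
  have hfe : (fun ω : ℤ → Bool => g (ω k))
      = fun ω => if ω ∈ {ω : ℤ → Bool | ω k = true} then g true else g false := by
    funext ω
    by_cases h : ω k = true
    · simp [h]
    · rw [Bool.not_eq_true] at h
      simp [h]
  have hfe2 : (fun ω : ℤ → Bool => if ω ∈ {ω : ℤ → Bool | ω k = true} then g true else g false)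
      = fun ω => Set.indicator {ω : ℤ → Bool | ω k = true} (fun _ => g true - g false) ω
          + g false := by
    funext ω
    by_cases h : ω ∈ {ω : ℤ → Bool | ω k = true}
    · simp [h]
    · simp [h]
  rw [hfe, hfe2, integral_add (((integrable_const (g true - g false)).indicator hA))
    (integrable_const (g false)), integral_indicator_const _ hA, integral_const]
  rw [measureReal_def, hber k]
  rw [ENNReal.toReal_ofReal hp.1.le]
  simp only [probReal_univ, measure_univ, ENNReal.toReal_one, one_smul, smul_eq_mul]
  unfold avgC
  rw [Complex.real_smul]
  ring

lemma integrable_of_bdd {α : Type*} [MeasurableSpace α] {μ : Measure α} [IsFiniteMeasure μ]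
    {f : α → ℂ} (hm : Measurable f) (C : ℝ) (hC : ∀ x, ‖f x‖ ≤ C) : Integrable f μ :=
  (integrable_const C).mono' hm.aestronglyMeasurable (Filter.Eventually.of_forall hC)

lemma integral_coord_mul_sit {P₀ : Measure (ℤ → Bool)} [IsProbabilityMeasure P₀]
    (hiid : iIndepFun (fun l ω => ω l) P₀)
    (p : ℝ) (hp : 0 < p ∧ p < 1)
    (hber : ∀ l : ℤ, P₀ {ω | ω l = true} = ENNReal.ofReal p)
    (S : Bool → ℝ → ℝ → ℝ) (hScont : ∀ s, Continuous fun q : ℝ × ℝ => S s q.1 q.2)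
    (ε θ : ℝ) (l : ℕ) (g : Bool → ℂ) (G : ℝ → ℂ) (hG : Measurable G)
    (CG : ℝ) (hGbdd : ∀ x, ‖G x‖ ≤ CG) :
    ∫ ω, g (ω (l : ℤ)) * G (Sit S ω ε l θ) ∂P₀
      = avgC p g * ∫ ω, G (Sit S ω ε l θ) ∂P₀ := by
  have hgm : Measurable fun ω : ℤ → Bool => g (ω (l : ℤ)) :=
    (measurable_of_countable g).comp (measurable_pi_apply (l : ℤ))
  have hGm : Measurable fun ω : ℤ → Bool => G (Sit S ω ε l θ) :=
    hG.comp (measurable_Sit S hScont ε θ l)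
  have hgi : Integrable (fun ω : ℤ → Bool => g (ω (l : ℤ))) P₀ :=
    integrable_of_bdd hgm (max ‖g true‖ ‖g false‖) (by
      intro ω
      rcases Bool.dichotomy (ω (l : ℤ)) with h | h <;> rw [h]
      · exact le_max_right _ _
      · exact le_max_left _ _)
  have hGi : Integrable (fun ω : ℤ → Bool => G (Sit S ω ε l θ)) P₀ :=
    integrable_of_bdd hGm CG (fun ω => hGbdd _)
  have hIndep : IndepFun (fun ω : ℤ → Bool => g (ω (l : ℤ)))
      (fun ω : ℤ → Bool => G (Sit S ω ε l θ)) P₀ := by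
    have := (indepFun_sit hiid S hScont ε θ l).comp hG (measurable_of_countable g)
    exact this.symm
  rw [indep_integral_mul_complex hIndep hgi hGi, integral_coord p hp hber]

lemma tele_sum (u : ℕ → ℂ) (lam : ℂ) (δ : ℝ)
    (hu : ∀ l, Complex.abs (u l) ≤ 1)
    (hstep : ∀ l, Complex.abs (u (l + 1) - lam * u l) ≤ δ) (N : ℕ) :
    Complex.abs ((1 - lam) * ∑ l ∈ Finset.range N, u l) ≤ 2 + N * δ := by
  have key : ∀ N : ℕ, (1 - lam) * ∑ l ∈ Finset.range N, u l
      = u 0 - u N + ∑ l ∈ Finset.range N, (u (l + 1) - lam * u l) := by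
    intro N
    induction N with
    | zero => simp
    | succ n ih =>
      rw [Finset.sum_range_succ, Finset.sum_range_succ, mul_add, ih]
      ring
  rw [key]
  calc Complex.abs (u 0 - u N + ∑ l ∈ Finset.range N, (u (l + 1) - lam * u l))
      ≤ Complex.abs (u 0 - u N)
        + Complex.abs (∑ l ∈ Finset.range N, (u (l + 1) - lam * u l)) := Complex.abs.add_le _ _
    _ ≤ (Complex.abs (u 0) + Complex.abs (u N)) + ∑ l ∈ Finset.range N, δ := by
        gcongr
        · exact Complex.abs.sub_le_add _ _
        · calc Complex.abs (∑ l ∈ Finset.range N, (u (l + 1) - lam * u l))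
              ≤ ∑ l ∈ Finset.range N, Complex.abs (u (l + 1) - lam * u l) :=
                Complex.abs.sum_le _ _
            _ ≤ ∑ l ∈ Finset.range N, δ := Finset.sum_le_sum (fun l _ => hstep l)
    _ ≤ 2 + N * δ := by
        have h0 := hu 0
        have hN := hu N
        simp only [Finset.sum_const, Finset.card_range, nsmul_eq_mul]
        linarith

end Aux

set_option maxHeartbeats 2000000 in
/-- A priori bound on averaged oscillatory sums (first part of Proposition 2). -/
theorem stmt8
    (L : Bool → ℕ) (hL : ∀ s, 1 ≤ L s) (vh th : Bool → ℕ → ℝ)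
    (hth : ∀ s j, j < L s → 0 < th s j) (Ec : ℝ)
    (hcomm : Tpoly L vh th Ec true * Tpoly L vh th Ec false
           = Tpoly L vh th Ec false * Tpoly L vh th Ec true)
    (hell : ∀ s, |(Tpoly L vh th Ec s).trace| < 2 ∨
      Tpoly L vh th Ec s = 1 ∨ Tpoly L vh th Ec s = -1)
    (M : Matrix (Fin 2) (Fin 2) ℝ) (hM : IsUnit M.det) (η : Bool → ℝ)
    (hrot : ∀ s, M * Tpoly L vh th Ec s * M⁻¹ = rotMat (η s))
    (p : ℝ) (hp : 0 < p ∧ p < 1) (P₀ : Measure (ℤ → Bool))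
    [IsProbabilityMeasure P₀]
    (hiid : ProbabilityTheory.iIndepFun (fun (l : ℤ) (ω : ℤ → Bool) => ω l) P₀)
    (hber : ∀ l : ℤ, P₀ {ω | ω l = true} = ENNReal.ofReal p)
    (a b : Bool → ℝ → ℂ)
    (hab : ∀ s ε, ((M * Tpoly L vh th (Ec + ε) s * M⁻¹).map Complex.ofReal).mulVec vv
      = a s ε • vv + b s ε • vvbar)
    (S ρ : Bool → ℝ → ℝ → ℝ)
    (hSρ : ∀ s ε θ, 0 < ρ s ε θ ∧
      (M * Tpoly L vh th (Ec + ε) s * M⁻¹).mulVec ![Real.cos θ, Real.sin θ]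
        = ρ s ε θ • ![Real.cos (S s ε θ), Real.sin (S s ε θ)])
    (hScont : ∀ s, Continuous fun q : ℝ × ℝ => S s q.1 q.2)
    (hSper : ∀ s ε θ, S s ε (θ + Real.pi) = S s ε θ + Real.pi)
    (hSnorm : ∀ s θ, S s 0 θ = θ + η s)
    (j : ℕ) (hj : j = 1 ∨ j = 2) (c : Bool → ℂ)
    (hnonan : avgC p (fun s => Complex.exp (2 * (j : ℂ) * Complex.I * (η s : ℂ))) ≠ 1) :
    ∃ C ε₀ : ℝ, 0 < C ∧ 0 < ε₀ ∧ ∀ ε : ℝ, |ε| ≤ ε₀ → ∀ N : ℕ, 1 ≤ N → ∀ θ : ℝ,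
      ‖∫ ω, (∑ l ∈ Finset.range N,
          c (ω (l : ℤ)) * Complex.exp (2 * (j : ℂ) * Complex.I * (Sit S ω ε l θ : ℂ))) ∂P₀‖
        ≤ C * ((N : ℝ) * (‖b true ε‖ + ‖b false ε‖) + 1) := by
  classical
  simp only [Complex.norm_eq_abs]
  -- basic numbers
  have hn4 : (2 * j : ℕ) ≤ 4 := by rcases hj with h | h <;> simp [h]
  -- the a coefficient as an explicit continuous function of ε
  have habf : ∀ s ε, a s ε
      = ((((M * Tpoly L vh th (Ec + ε) s * M⁻¹) 0 0
            + (M * Tpoly L vh th (Ec + ε) s * M⁻¹) 1 1 : ℝ) : ℂ)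
          + (((M * Tpoly L vh th (Ec + ε) s * M⁻¹) 1 0
            - (M * Tpoly L vh th (Ec + ε) s * M⁻¹) 0 1 : ℝ) : ℂ) * Complex.I) / 2 :=
    fun s ε => (ab_formulas _ _ _ (hab s ε)).1
  have hacont : ∀ s, Continuous fun ε : ℝ => a s ε := by
    intro s
    have hc : ∀ i k : Fin 2, Continuous fun ε : ℝ => (M * Tpoly L vh th (Ec + ε) s * M⁻¹) i k := by
      intro i k
      exact continuous_conj_entry M M⁻¹ (L s) (vh s) (th s) Ec i k
    have : (fun ε : ℝ => a s ε)
        = fun ε => ((((M * Tpoly L vh th (Ec + ε) s * M⁻¹) 0 0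
            + (M * Tpoly L vh th (Ec + ε) s * M⁻¹) 1 1 : ℝ) : ℂ)
          + (((M * Tpoly L vh th (Ec + ε) s * M⁻¹) 1 0
            - (M * Tpoly L vh th (Ec + ε) s * M⁻¹) 0 1 : ℝ) : ℂ) * Complex.I) / 2 := by
      funext ε; exact habf s ε
    rw [this]
    exact (((Complex.continuous_ofReal.comp ((hc 0 0).add (hc 1 1))).add
      ((Complex.continuous_ofReal.comp ((hc 1 0).sub (hc 0 1))).mul continuous_const)).div_const 2)
  have ha0 : ∀ s, a s 0 = Complex.exp ((η s : ℂ) * Complex.I) := by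
    intro s
    have h0 : M * Tpoly L vh th (Ec + 0) s * M⁻¹ = rotMat (η s) := by
      rw [add_zero]; exact hrot s
    rw [habf s 0, h0, Complex.exp_mul_I]
    simp [rotMat]
    push_cast
    ring
  have ha0abs : ∀ s, Complex.abs (a s 0) = 1 := by
    intro s
    rw [ha0 s, Complex.abs_exp_ofReal_mul_I]
  -- the multiplier function
  set Λ : ℝ → ℂ := fun ε => avgC p (fun s => (a s ε / (Complex.abs (a s ε) : ℂ)) ^ (2 * j))
    with hΛdef
  have hΛ0 : Λ 0 = avgC p (fun s => Complex.exp (2 * (j : ℂ) * Complex.I * (η s : ℂ))) := by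
    have hv : ∀ s, (a s 0 / (Complex.abs (a s 0) : ℂ)) ^ (2 * j)
        = Complex.exp (2 * (j : ℂ) * Complex.I * (η s : ℂ)) := by
      intro s
      rw [ha0abs, ha0]
      push_cast
      rw [div_one, ← Complex.exp_nat_mul]
      congr 1
      push_cast
      ring
    rw [hΛdef]
    unfold avgC
    simp only [hv]
  set δ₀ : ℝ := Complex.abs (1 - Λ 0) / 2 with hδ₀def
  have hδ₀ : 0 < δ₀ := by
    have : Λ 0 ≠ 1 := by rw [hΛ0]; exact hnonan
    have : (1 : ℂ) - Λ 0 ≠ 0 := sub_ne_zero.mpr (Ne.symm this)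
    have := Complex.abs.pos this
    positivity
  -- continuity of Λ at 0
  have hΛcont : ContinuousAt Λ 0 := by
    have hs : ∀ s : Bool, ContinuousAt (fun ε : ℝ => (a s ε / (Complex.abs (a s ε) : ℂ)) ^ (2 * j)) 0 := by
      intro s
      apply ContinuousAt.pow
      apply ContinuousAt.div
      · exact (hacont s).continuousAt
      · exact (Complex.continuous_ofReal.comp (Complex.continuous_abs.comp (hacont s))).continuousAt
      · rw [ha0abs s]
        norm_num
    exact (continuousAt_const.mul (hs true)).add (continuousAt_const.mul (hs false))
  -- choose ε₀
  have hev : ∀ᶠ ε : ℝ in nhds 0, δ₀ < Complex.abs (1 - Λ ε)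
      ∧ (1:ℝ)/2 < Complex.abs (a true ε) ∧ (1:ℝ)/2 < Complex.abs (a false ε) := by
    have h1 : ∀ᶠ ε : ℝ in nhds 0, δ₀ < Complex.abs (1 - Λ ε) := by
      have hc : ContinuousAt (fun ε : ℝ => Complex.abs (1 - Λ ε)) 0 :=
        Complex.continuous_abs.continuousAt.comp (continuousAt_const.sub hΛcont)
      have hlt : δ₀ < Complex.abs (1 - Λ 0) := by
        rw [hδ₀def]
        linarith [hδ₀]
      exact continuousAt_const.eventually_lt hc hlt
    have h2 : ∀ s : Bool, ∀ᶠ ε : ℝ in nhds 0, (1:ℝ)/2 < Complex.abs (a s ε) := by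
      intro s
      have hc : ContinuousAt (fun ε : ℝ => Complex.abs (a s ε)) 0 :=
        Complex.continuous_abs.continuousAt.comp (hacont s).continuousAt
      have hlt : (1:ℝ)/2 < Complex.abs (a s 0) := by rw [ha0abs s]; norm_num
      exact continuousAt_const.eventually_lt hc (by simpa using hlt)
    exact h1.and ((h2 true).and (h2 false))
  rw [Metric.eventually_nhds_iff] at hev
  obtain ⟨r, hr, hball⟩ := hev
  refine ⟨(Complex.abs (avgC p c) + 1) * 18 / δ₀ + 1, r / 2, ?_, by positivity, ?_⟩
  · positivity
  intro ε hε N hN θ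
  have hεmem : δ₀ < Complex.abs (1 - Λ ε)
      ∧ (1:ℝ)/2 < Complex.abs (a true ε) ∧ (1:ℝ)/2 < Complex.abs (a false ε) := by
    apply hball
    rw [Real.dist_eq, sub_zero]
    linarith
  obtain ⟨HΛ, Hat, Haf⟩ := hεmem
  have Ha : ∀ s, (1:ℝ)/2 < Complex.abs (a s ε) := fun s => by cases s <;> assumption
  have Hane : ∀ s, a s ε ≠ 0 := fun s => by
    intro h
    have := Ha s
    rw [h] at this
    simp at this
    linarith
  -- notation
  set B : ℝ := Complex.abs (b true ε) + Complex.abs (b false ε) with hBdef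
  have hB0 : 0 ≤ B := by positivity
  have hbB : ∀ s, Complex.abs (b s ε) ≤ B := fun s => by
    cases s
    · simp only [hBdef]; nlinarith [Complex.abs.nonneg (b true ε)]
    · simp only [hBdef]; nlinarith [Complex.abs.nonneg (b false ε)]
  set G : ℝ → ℂ := fun x => Complex.exp (2 * (j : ℂ) * Complex.I * (x : ℂ)) with hGdef
  have hGpow : ∀ x : ℝ, G x = Complex.exp ((x : ℂ) * Complex.I) ^ (2 * j) := by
    intro x
    show Complex.exp (2 * (j : ℂ) * Complex.I * (x : ℂ)) = _
    rw [← Complex.exp_nat_mul]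
    congr 1
    push_cast
    ring
  have hGabs : ∀ x : ℝ, Complex.abs (G x) = 1 := by
    intro x
    rw [hGpow, map_pow, Complex.abs_exp_ofReal_mul_I, one_pow]
  have hGm : Measurable G := by
    apply Continuous.measurable
    apply Complex.continuous_exp.comp
    exact continuous_const.mul Complex.continuous_ofReal
  set lam : Bool → ℂ := fun s => (a s ε / (Complex.abs (a s ε) : ℂ)) ^ (2 * j) with hlamdef
  have hlamabs : ∀ s, Complex.abs (lam s) = 1 := by
    intro s
    rw [hlamdef]
    simp only [map_pow, map_div₀, Complex.abs_ofReal, Complex.abs_abs,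
      abs_of_nonneg (Complex.abs.nonneg (a s ε))]
    rw [div_self (Complex.abs.ne_zero (Hane s)), one_pow]
  have hΛε : Λ ε = avgC p lam := rfl
  -- pointwise estimate
  have hpt : ∀ (σ : Bool) (φ : ℝ),
      Complex.abs (G (S σ ε φ) - lam σ * G φ) ≤ 16 * B := by
    intro σ φ
    obtain ⟨hρpos, hSeq⟩ := hSρ σ ε φ
    have hw := key_w (M * Tpoly L vh th (Ec + ε) σ * M⁻¹) (a σ ε) (b σ ε) (hab σ ε)
      φ (S σ ε φ) (ρ σ ε φ) hSeq
    set w : ℂ := a σ ε * Complex.exp ((φ : ℂ) * Complex.I)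
      + (starRingEnd ℂ) (b σ ε) * Complex.exp (-(φ : ℂ) * Complex.I) with hwdef
    set z : ℂ := a σ ε * Complex.exp ((φ : ℂ) * Complex.I) with hzdef
    have hzabs : Complex.abs z = Complex.abs (a σ ε) := by
      rw [hzdef, map_mul, Complex.abs_exp_ofReal_mul_I, mul_one]
    have hzne : z ≠ 0 := by
      intro h
      rw [h] at hzabs
      have := Ha σ
      rw [← hzabs] at this
      simp at this
      linarith
    have hwabs : Complex.abs w = ρ σ ε φ := by
      rw [← hw, map_mul, Complex.abs_exp_ofReal_mul_I, mul_one, Complex.abs_ofReal,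
        abs_of_pos hρpos]
    have hwne : w ≠ 0 := by
      intro h
      rw [h, map_zero] at hwabs
      exact absurd hwabs.symm hρpos.ne'
    have hu : Complex.exp (((S σ ε φ : ℝ) : ℂ) * Complex.I) = w / (Complex.abs w : ℂ) := by
      rw [hwabs]
      have hρne : ((ρ σ ε φ : ℝ) : ℂ) ≠ 0 := by exact_mod_cast hρpos.ne'
      rw [eq_div_iff hρne]
      linear_combination hw
    have hwz : Complex.abs (w - z) = Complex.abs (b σ ε) := by
      have : w - z = (starRingEnd ℂ) (b σ ε) * Complex.exp (-(φ : ℂ) * Complex.I) := by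
        rw [hwdef, hzdef]; ring
      rw [this, map_mul]
      have : -(φ : ℂ) * Complex.I = ((-φ : ℝ) : ℂ) * Complex.I := by push_cast; ring
      rw [this, Complex.abs_exp_ofReal_mul_I, mul_one, Complex.abs_conj]
    have hdir : Complex.abs (w / (Complex.abs w : ℂ) - z / (Complex.abs z : ℂ))
        ≤ 4 * Complex.abs (b σ ε) := by
      have h1 := unitDir_lip w z hwne hzne
      have h2 : 2 * Complex.abs (w - z) / Complex.abs z ≤ 4 * Complex.abs (b σ ε) := by
        rw [hwz, hzabs]
        rw [div_le_iff₀ (by linarith [Ha σ])]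
        nlinarith [Complex.abs.nonneg (b σ ε), Ha σ]
      exact h1.trans h2
    have huabs : Complex.abs (w / (Complex.abs w : ℂ)) = 1 := by
      rw [map_div₀, Complex.abs_ofReal, Complex.abs_abs,
        div_self (Complex.abs.ne_zero hwne)]
    have hu'abs : Complex.abs (z / (Complex.abs z : ℂ)) = 1 := by
      rw [map_div₀, Complex.abs_ofReal, Complex.abs_abs,
        div_self (Complex.abs.ne_zero hzne)]
    have hpow := unit_pow_lip _ _ huabs hu'abs (2 * j)
    have hfin : Complex.abs ((w / (Complex.abs w : ℂ)) ^ (2*j) - (z / (Complex.abs z : ℂ)) ^ (2*j))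
        ≤ 16 * Complex.abs (b σ ε) := by
      calc Complex.abs ((w / (Complex.abs w : ℂ)) ^ (2*j) - (z / (Complex.abs z : ℂ)) ^ (2*j))
          ≤ (2*j : ℕ) * Complex.abs (w / (Complex.abs w : ℂ) - z / (Complex.abs z : ℂ)) := hpow
        _ ≤ 4 * (4 * Complex.abs (b σ ε)) := by
            apply mul_le_mul
            · exact_mod_cast hn4
            · exact hdir
            · exact Complex.abs.nonneg _
            · norm_num
        _ = 16 * Complex.abs (b σ ε) := by ring
    have hGS : G (S σ ε φ) = (w / (Complex.abs w : ℂ)) ^ (2*j) := by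
      rw [hGpow, hu]
    have hGφ : lam σ * G φ = (z / (Complex.abs z : ℂ)) ^ (2*j) := by
      rw [hGpow, hlamdef, hzdef, hzabs]
      rw [← mul_pow]
      congr 1
      ring
    rw [hGS, hGφ]
    calc Complex.abs ((w / (Complex.abs w : ℂ)) ^ (2*j) - (z / (Complex.abs z : ℂ)) ^ (2*j))
        ≤ 16 * Complex.abs (b σ ε) := hfin
      _ ≤ 16 * B := by nlinarith [hbB σ]
  -- the sequence u
  set u : ℕ → ℂ := fun l => ∫ ω, G (Sit S ω ε l θ) ∂P₀ with hudef
  have hmeasSit : ∀ l, Measurable fun ω : ℤ → Bool => Sit S ω ε l θ :=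
    fun l => measurable_Sit S hScont ε θ l
  have hGSitm : ∀ l, Measurable fun ω : ℤ → Bool => G (Sit S ω ε l θ) :=
    fun l => hGm.comp (hmeasSit l)
  have hGSiti : ∀ l, Integrable (fun ω : ℤ → Bool => G (Sit S ω ε l θ)) P₀ :=
    fun l => integrable_of_bdd (hGSitm l) 1 (fun ω => le_of_eq (hGabs _))
  have hu1 : ∀ l, Complex.abs (u l) ≤ 1 := by
    intro l
    rw [hudef]
    calc Complex.abs (∫ ω, G (Sit S ω ε l θ) ∂P₀)
        ≤ 1 * P₀.real Set.univ := by
          rw [← Complex.norm_eq_abs]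
          apply norm_integral_le_of_norm_le_const
          exact Filter.Eventually.of_forall (fun ω => le_of_eq (hGabs _))
      _ = 1 := by simp
  -- recursion step
  have hstep : ∀ l, Complex.abs (u (l + 1) - Λ ε * u l) ≤ 16 * B := by
    intro l
    have hXdef : (fun ω : ℤ → Bool => G (Sit S ω ε (l+1) θ))
        = fun ω => (G (S (ω (l:ℤ)) ε (Sit S ω ε l θ)) - lam (ω (l:ℤ)) * G (Sit S ω ε l θ))
            + lam (ω (l:ℤ)) * G (Sit S ω ε l θ) := by
      funext ω
      show G (S (ω (l:ℤ)) ε (Sit S ω ε l θ)) = _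
      ring
    have hmerr : Measurable fun ω : ℤ → Bool =>
        G (S (ω (l:ℤ)) ε (Sit S ω ε l θ)) - lam (ω (l:ℤ)) * G (Sit S ω ε l θ) := by
      have h1 : Measurable fun ω : ℤ → Bool => G (S (ω (l:ℤ)) ε (Sit S ω ε l θ)) :=
        hGSitm (l+1)
      have h2 : Measurable fun ω : ℤ → Bool => lam (ω (l:ℤ)) * G (Sit S ω ε l θ) :=
        ((measurable_of_countable lam).comp (measurable_pi_apply (l:ℤ))).mul (hGSitm l)
      exact h1.sub h2
    have hierr : Integrable (fun ω : ℤ → Bool =>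
        G (S (ω (l:ℤ)) ε (Sit S ω ε l θ)) - lam (ω (l:ℤ)) * G (Sit S ω ε l θ)) P₀ :=
      integrable_of_bdd hmerr (16 * B) (fun ω => hpt _ _)
    have himul : Integrable (fun ω : ℤ → Bool => lam (ω (l:ℤ)) * G (Sit S ω ε l θ)) P₀ :=
      integrable_of_bdd
        (((measurable_of_countable lam).comp (measurable_pi_apply (l:ℤ))).mul (hGSitm l)) 1
        (fun ω => by
          rw [norm_mul]
          rw [show ‖lam (ω (l:ℤ))‖ = Complex.abs (lam (ω (l:ℤ))) from rfl, hlamabs]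
          rw [show ‖G (Sit S ω ε l θ)‖ = Complex.abs (G (Sit S ω ε l θ)) from rfl, hGabs]
          norm_num)
    have hsplit : u (l+1) = (∫ ω, (G (S (ω (l:ℤ)) ε (Sit S ω ε l θ))
          - lam (ω (l:ℤ)) * G (Sit S ω ε l θ)) ∂P₀) + Λ ε * u l := by
      rw [hudef]
      show (∫ ω, G (Sit S ω ε (l+1) θ) ∂P₀) = _
      rw [hXdef, integral_add hierr himul]
      congr 1
      rw [integral_coord_mul_sit hiid p hp hber S hScont ε θ l lam G hGm 1
        (fun x => le_of_eq (hGabs x)), hΛε]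
    rw [hsplit]
    rw [add_sub_cancel_right]
    calc Complex.abs (∫ ω, (G (S (ω (l:ℤ)) ε (Sit S ω ε l θ))
          - lam (ω (l:ℤ)) * G (Sit S ω ε l θ)) ∂P₀)
        ≤ (16 * B) * P₀.real Set.univ := by
          rw [← Complex.norm_eq_abs]
          apply norm_integral_le_of_norm_le_const
          exact Filter.Eventually.of_forall (fun ω => hpt _ _)
      _ = 16 * B := by simp
  -- sum bound
  have htele := tele_sum u (Λ ε) (16 * B) hu1 hstep N
  have hsum : Complex.abs (∑ l ∈ Finset.range N, u l) ≤ (2 + N * (16 * B)) / δ₀ := by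
    have h1 : Complex.abs (1 - Λ ε) * Complex.abs (∑ l ∈ Finset.range N, u l)
        ≤ 2 + N * (16 * B) := by
      rw [← map_mul]
      exact htele
    have h2 : δ₀ * Complex.abs (∑ l ∈ Finset.range N, u l) ≤ 2 + N * (16 * B) := by
      nlinarith [Complex.abs.nonneg (∑ l ∈ Finset.range N, u l), HΛ]
    rw [le_div_iff₀ hδ₀]
    linarith
  -- identify the target integral
  have hci : ∀ l : ℕ, Integrable (fun ω : ℤ → Bool =>
      c (ω (l:ℤ)) * G (Sit S ω ε l θ)) P₀ :=
    fun l => integrable_of_bdd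
      (((measurable_of_countable c).comp (measurable_pi_apply (l:ℤ))).mul (hGSitm l))
      (max ‖c true‖ ‖c false‖) (fun ω => by
        rw [norm_mul, show ‖G (Sit S ω ε l θ)‖ = Complex.abs (G (Sit S ω ε l θ)) from rfl,
          hGabs, mul_one]
        rcases Bool.dichotomy (ω (l:ℤ)) with h | h <;> rw [h]
        · exact le_max_right _ _
        · exact le_max_left _ _)
  have hIeq : (∫ ω, (∑ l ∈ Finset.range N,
        c (ω (l : ℤ)) * Complex.exp (2 * (j : ℂ) * Complex.I * (Sit S ω ε l θ : ℂ))) ∂P₀)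
      = avgC p c * ∑ l ∈ Finset.range N, u l := by
    have e1 : (∫ ω, (∑ l ∈ Finset.range N,
          c (ω (l : ℤ)) * Complex.exp (2 * (j : ℂ) * Complex.I * (Sit S ω ε l θ : ℂ))) ∂P₀)
        = ∑ l ∈ Finset.range N, ∫ ω, c (ω (l : ℤ)) * G (Sit S ω ε l θ) ∂P₀ := by
      rw [← integral_finset_sum _ (fun l _ => hci l)]
    rw [e1, Finset.mul_sum]
    apply Finset.sum_congr rfl
    intro l _
    rw [integral_coord_mul_sit hiid p hp hber S hScont ε θ l c G hGm 1
      (fun x => le_of_eq (hGabs x)), hudef]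
  rw [hIeq, map_mul]
  set K : ℝ := Complex.abs (avgC p c) with hKdef
  have hK0 : 0 ≤ K := Complex.abs.nonneg _
  calc K * Complex.abs (∑ l ∈ Finset.range N, u l)
      ≤ K * ((2 + N * (16 * B)) / δ₀) := by
        apply mul_le_mul_of_nonneg_left hsum hK0
    _ ≤ ((K + 1) * 18 / δ₀ + 1) * ((N : ℝ) * B + 1) := by
        have hNB : 0 ≤ (N : ℝ) * B := by positivity
        have h1 : K * (2 + (N : ℝ) * (16 * B)) ≤ (K + 1) * 18 * ((N : ℝ) * B + 1) := by
          nlinarith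
        calc K * ((2 + (N : ℝ) * (16 * B)) / δ₀)
            = (K * (2 + (N : ℝ) * (16 * B))) / δ₀ := by ring
          _ ≤ ((K + 1) * 18 * ((N : ℝ) * B + 1)) / δ₀ := by gcongr
          _ = ((K + 1) * 18 / δ₀) * ((N : ℝ) * B + 1) := by ring
          _ ≤ ((K + 1) * 18 / δ₀ + 1) * ((N : ℝ) * B + 1) := by nlinarith [div_nonneg (by nlinarith : (0:ℝ) ≤ (K+1)*18) hδ₀.le]
    _ = ((Complex.abs (avgC p c) + 1) * 18 / δ₀ + 1) * ((N : ℝ) * B + 1) := rfl
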